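/- Fix constants γ₊ ≥ 0, γ₋ > 0, μ ∈ ℝ, and define f(x) = γ₋ x + γ₊ ln x, G(x) = γ₋ ln x − γ₊/x, Δ(x) = γ₊ + γ₋ − γ₊/x − γ₋ x + (γ₋ − γ₊ − μ)·ln x, and h(x) = (γ₋ x + γ₊/x − (γ₊+γ₋))/ln x for x ∈ (0,1). Let (z_n)_{n≥0} be a sequence in (0,1] satisfying 2·(f(z_1) − f(z_0)) = Δ(z_0) and, for all n ≥ 1, (n+2)·(f(z_{n+1}) − f(z_n)) = n·(G(z_n) − G(z_{n−1})) + Δ(z_n). If z_0 ∈ (0,1) and h(z_0) > γ₋ − γ₊ − μ, then (z_n) is strictly increasing: z_0 < z_1 < z_2 < .... -/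

import Mathlib

noncomputable def f (γp γm x : ℝ) : ℝ := γm * x + γp * Real.log x
noncomputable def G (γp γm x : ℝ) : ℝ := γm * Real.log x - γp / x
noncomputable def Δ (γp γm μ x : ℝ) : ℝ :=
  γp + γm - γp / x - γm * x + (γm - γp - μ) * Real.log x
noncomputable def h (γp γm x : ℝ) : ℝ := (γm * x + γp / x - (γp + γm)) / Real.log x

/-- `f` is monotone on positives. -/
lemma f_mono (γp γm : ℝ) (hγp : 0 ≤ γp) (hγm : 0 < γm) {a b : ℝ}
    (ha : 0 < a) (hab : a ≤ b) : f γp γm a ≤ f γp γm b := by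
  have h1 : γm * a ≤ γm * b := by nlinarith
  have h2 : Real.log a ≤ Real.log b := Real.log_le_log ha hab
  have : γp * Real.log a ≤ γp * Real.log b := by nlinarith
  simp only [f]; linarith

/-- `G` is strictly monotone on positives. -/
lemma G_strict (γp γm : ℝ) (hγp : 0 ≤ γp) (hγm : 0 < γm) {a b : ℝ}
    (ha : 0 < a) (hab : a < b) : G γp γm a < G γp γm b := by
  have h1 : Real.log a < Real.log b := Real.log_lt_log ha hab
  have h2 : γp / b ≤ γp / a := by
    apply div_le_div_of_nonneg_left hγp ha (le_of_lt hab)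
  have : γm * Real.log a < γm * Real.log b := by nlinarith
  simp only [G]; linarith

/-- for `0 < x < 1`, `log x + 1/x - 1 > 0`. -/
lemma log_aux1 {x : ℝ} (hx : 0 < x) (hx1 : x < 1) :
    0 < Real.log x + 1 / x - 1 := by
  have hinv : (1:ℝ) < 1 / x := by rw [lt_div_iff₀ hx]; linarith
  have := Real.log_lt_sub_one_of_pos (x := 1/x) (by positivity) (by linarith)
  rw [Real.log_div one_ne_zero (ne_of_gt hx), Real.log_one] at this
  linarith

/-- for `0 < x < 1`, `x - 1 - log x > 0`. -/
lemma log_aux2 {x : ℝ} (hx : 0 < x) (hx1 : x < 1) :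
    0 < x - 1 - Real.log x := by
  have := Real.log_lt_sub_one_of_pos hx (ne_of_lt hx1)
  linarith

lemma h_hasDerivAt (γp γm : ℝ) {x : ℝ} (hx : 0 < x) (hx1 : x < 1) :
    HasDerivAt (h γp γm)
      (((γm + γp * -(x ^ 2)⁻¹) * Real.log x
        - (γm * x + γp / x - (γp + γm)) * x⁻¹) / Real.log x ^ 2) x := by
  have hx0 : x ≠ 0 := ne_of_gt hx
  have hlog : Real.log x ≠ 0 := by
    have : Real.log x < 0 := Real.log_neg hx hx1
    linarith
  have h1 : HasDerivAt (fun y : ℝ => γm * y) γm x := by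
    simpa using (hasDerivAt_id x).const_mul γm
  have h2 : HasDerivAt (fun y : ℝ => γp / y) (γp * -(x ^ 2)⁻¹) x := by
    simpa [div_eq_mul_inv] using (hasDerivAt_inv hx0).const_mul γp
  have hN : HasDerivAt (fun y : ℝ => γm * y + γp / y - (γp + γm))
      (γm + γp * -(x ^ 2)⁻¹) x := by
    simpa using (h1.add h2).sub_const (γp + γm)
  have hD : HasDerivAt Real.log x⁻¹ x := Real.hasDerivAt_log hx0
  have := hN.div hD hlog
  exact this

/-- `h` is strictly monotone on `(0,1)`. -/
lemma h_strictMonoOn (γp γm : ℝ) (hγp : 0 ≤ γp) (hγm : 0 < γm) :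
    StrictMonoOn (h γp γm) (Set.Ioo (0:ℝ) 1) := by
  apply strictMonoOn_of_deriv_pos (convex_Ioo 0 1)
  · intro x hx
    exact (h_hasDerivAt γp γm hx.1 hx.2).continuousAt.continuousWithinAt
  · intro x hx
    rw [interior_Ioo] at hx
    obtain ⟨hx0, hx1⟩ := hx
    rw [(h_hasDerivAt γp γm hx0 hx1).deriv]
    have hlogneg : Real.log x < 0 := Real.log_neg hx0 hx1
    have hA := log_aux1 hx0 hx1
    have hB := log_aux2 hx0 hx1
    apply div_pos _ (by nlinarith [sq_nonneg (Real.log x)])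
    have hx2 : (0:ℝ) < x ^ 2 := by positivity
    have key : ((γm + γp * -(x ^ 2)⁻¹) * Real.log x
        - (γm * x + γp / x - (γp + γm)) * x⁻¹)
        = γm * (Real.log x + 1 / x - 1)
          + γp / x ^ 2 * (x - 1 - Real.log x) := by
      field_simp
      ring
    rw [key]
    have t1 : 0 < γm * (Real.log x + 1 / x - 1) := by positivity
    have t2 : 0 ≤ γp / x ^ 2 * (x - 1 - Real.log x) := by positivity
    linarith

lemma delta_eq (γp γm μ x : ℝ) (hx : 0 < x) (hx1 : x < 1) :
    Δ γp γm μ x = (γm - γp - μ - h γp γm x) * Real.log x := by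
  have hlog : Real.log x ≠ 0 := ne_of_lt (Real.log_neg hx hx1)
  simp only [Δ, h]
  field_simp
  ring

/-- Monotonicity lemma (strictly increasing case): if `z_0 ∈ (0,1)` and
`h(z_0) > γ₋ − γ₊ − μ`, any solution of the Lagrange recursion is strictly
increasing. -/
theorem zseq_strictMono (γp γm μ : ℝ) (hγp : 0 ≤ γp) (hγm : 0 < γm)
    (z : ℕ → ℝ) (hz : ∀ n, z n ∈ Set.Ioc (0 : ℝ) 1)
    (hrec0 : 2 * (f γp γm (z 1) - f γp γm (z 0)) = Δ γp γm μ (z 0))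
    (hrec : ∀ n : ℕ, 1 ≤ n →
      ((n : ℝ) + 2) * (f γp γm (z (n + 1)) - f γp γm (z n))
        = (n : ℝ) * (G γp γm (z n) - G γp γm (z (n - 1))) + Δ γp γm μ (z n))
    (hz0 : z 0 ∈ Set.Ioo (0 : ℝ) 1)
    (hh : h γp γm (z 0) > γm - γp - μ) :
    StrictMono z := by
  -- from f z a < f z b (a ≤ b would give contradiction) deduce a < b
  have f_rev : ∀ a b : ℝ, 0 < b → f γp γm a < f γp γm b → a < b := by
    intro a b hb hfab
    by_contra hba
    push_neg at hba
    exact absurd (f_mono γp γm hγp hγm hb hba) (by linarith)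
  have key : ∀ n, z n < z (n + 1) ∧ z 0 < z (n + 1) := by
    intro n
    induction n with
    | zero =>
      have hΔ : 0 < Δ γp γm μ (z 0) := by
        rw [delta_eq γp γm μ (z 0) hz0.1 hz0.2]
        have hlog : Real.log (z 0) < 0 := Real.log_neg hz0.1 hz0.2
        nlinarith
      have : f γp γm (z 0) < f γp γm (z 1) := by linarith
      have := f_rev _ _ (hz 1).1 this
      exact ⟨this, this⟩
    | succ n ih =>
      obtain ⟨h1, h2⟩ := ih
      have hzn := hz n
      have hzn1 := hz (n + 1)
      have hrecn := hrec (n + 1) (Nat.le_add_left 1 n)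
      simp only [Nat.add_sub_cancel] at hrecn
      have hG : G γp γm (z n) < G γp γm (z (n + 1)) :=
        G_strict γp γm hγp hγm hzn.1 h1
      have hΔ : 0 ≤ Δ γp γm μ (z (n + 1)) := by
        rcases lt_or_eq_of_le hzn1.2 with hlt | heq
        · have hmem : z (n + 1) ∈ Set.Ioo (0:ℝ) 1 := ⟨hzn1.1, hlt⟩
          have hmono := h_strictMonoOn γp γm hγp hγm hz0 hmem h2
          rw [delta_eq γp γm μ (z (n+1)) hzn1.1 hlt]
          have hlog : Real.log (z (n + 1)) < 0 := Real.log_neg hzn1.1 hlt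
          nlinarith
        · rw [heq]; simp [Δ]
      have hN : (0:ℝ) < (n:ℝ) + 1 := by positivity
      have hpos : 0 < ((n:ℝ) + 1 + 2) * (f γp γm (z (n + 2)) - f γp γm (z (n + 1))) := by
        push_cast at hrecn ⊢
        rw [hrecn]
        have : 0 < ((n:ℝ) + 1) * (G γp γm (z (n+1)) - G γp γm (z n)) := by nlinarith
        linarith
      have hf : f γp γm (z (n + 1)) < f γp γm (z (n + 2)) := by nlinarith
      have := f_rev _ _ (hz (n + 2)).1 hf
      exact ⟨this, lt_trans h2 this⟩
  exact strictMono_nat_of_lt_succ fun n => (key n).1
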